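/- arXiv:1403.2022 — 3 statements merged into one kernel-verified Lean document; each statement's English description precedes it below -/
import Mathlib

section
/- If g : ℝ^d → ℝ is translation equivariant and directionally differentiable, then the directional derivative is translation equivariant in the direction argument: g̃(x; z + c·1_d) = g̃(x; z) + c for every x, z ∈ ℝ^d and c ∈ ℝ. -/
open Filter

/-- For a translation equivariant, directionally differentiable `g`,
`g̃(x; z + c·1_d) = g̃(x; z) + c`. -/
theorem stmt3 (d : ℕ) (g : (Fin d → ℝ) → ℝ)
    (gd : (Fin d → ℝ) → (Fin d → ℝ) → ℝ)
    (htrans : ∀ (x : Fin d → ℝ) (c : ℝ), g (x + fun _ => c) = g x + c)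
    (hdir : ∀ x z : Fin d → ℝ,
      Tendsto (fun t : ℝ => (g (x + t • z) - g x) / t) (nhdsWithin 0 (Set.Ioi 0))
        (nhds (gd x z))) :
    ∀ (x z : Fin d → ℝ) (c : ℝ), gd x (z + fun _ => c) = gd x z + c := by
  intro x z c
  have h1 := hdir x (z + fun _ => c)
  have h2 : Tendsto (fun t : ℝ => (g (x + t • z) - g x) / t + c)
      (nhdsWithin 0 (Set.Ioi 0)) (nhds (gd x z + c)) :=
    (hdir x z).add tendsto_const_nhds
  have heq : ∀ t ∈ Set.Ioi (0:ℝ),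
      (g (x + t • (z + fun _ => c)) - g x) / t = (g (x + t • z) - g x) / t + c := by
    intro t ht
    have ht' : t ≠ 0 := ne_of_gt ht
    have : x + t • (z + fun _ => c) = (x + t • z) + fun _ => t * c := by
      funext i; simp [mul_comm]; ring
    rw [this, htrans]
    field_simp
    ring
  have h1' : Tendsto (fun t : ℝ => (g (x + t • z) - g x) / t + c)
      (nhdsWithin 0 (Set.Ioi 0)) (nhds (gd x (z + fun _ => c))) := by
    refine h1.congr' ?_
    filter_upwards [self_mem_nhdsWithin] with t ht using heq t ht
  exact tendsto_nhds_unique h1' h2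
end

section
/- Suppose f₁, f₂ : ℝ → ℝ are non-constant functions and g₁, g₂ : ℝ^d → ℝ are both translation-scale equivariant. If f₁ ∘ g₁ = f₂ ∘ g₂ as functions on ℝ^d, then f₁ = f₂ and g₁ = g₂. -/
/-- Uniqueness of the representation `f ∘ g`: if `f₁, f₂` are non-constant and
`g₁, g₂` are translation-scale equivariant with `f₁ ∘ g₁ = f₂ ∘ g₂`, then
`f₁ = f₂` and `g₁ = g₂`. -/
theorem stmt8 (d : ℕ) (hd : 0 < d) (f₁ f₂ : ℝ → ℝ) (g₁ g₂ : (Fin d → ℝ) → ℝ)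
    (hf₁ : ∃ y₁ y₂ : ℝ, f₁ y₁ ≠ f₁ y₂)
    (hf₂ : ∃ y₁ y₂ : ℝ, f₂ y₁ ≠ f₂ y₂)
    (h₁trans : ∀ (x : Fin d → ℝ) (c : ℝ), g₁ (x + fun _ => c) = g₁ x + c)
    (h₁scale : ∀ (x : Fin d → ℝ) (u : ℝ), 0 ≤ u → g₁ (u • x) = u * g₁ x)
    (h₂trans : ∀ (x : Fin d → ℝ) (c : ℝ), g₂ (x + fun _ => c) = g₂ x + c)
    (h₂scale : ∀ (x : Fin d → ℝ) (u : ℝ), 0 ≤ u → g₂ (u • x) = u * g₂ x)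
    (hcomp : ∀ x : Fin d → ℝ, f₁ (g₁ x) = f₂ (g₂ x)) :
    f₁ = f₂ ∧ g₁ = g₂ := by
  have hg₁0 : g₁ 0 = 0 := by simpa using h₁scale 0 0 le_rfl
  have hg₂0 : g₂ 0 = 0 := by simpa using h₂scale 0 0 le_rfl
  have hdiag₁ : ∀ c : ℝ, g₁ (fun _ => c) = c := by
    intro c
    have := h₁trans 0 c
    simpa [hg₁0] using this
  have hdiag₂ : ∀ c : ℝ, g₂ (fun _ => c) = c := by
    intro c
    have := h₂trans 0 c
    simpa [hg₂0] using this
  have hfe : f₁ = f₂ := by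
    funext c
    have := hcomp (fun _ => c)
    rwa [hdiag₁, hdiag₂] at this
  refine ⟨hfe, ?_⟩
  funext x
  by_contra hne
  set a := g₁ x with ha
  set b := g₂ x with hb
  -- key: f₁ (u*a + c) = f₁ (u*b + c) for all u ≥ 0, c
  have key : ∀ u : ℝ, 0 ≤ u → ∀ c : ℝ, f₁ (u * a + c) = f₁ (u * b + c) := by
    intro u hu c
    have h1 : g₁ (u • x + fun _ => c) = u * a + c := by
      rw [h₁trans, h₁scale x u hu]
    have h2 : g₂ (u • x + fun _ => c) = u * b + c := by
      rw [h₂trans, h₂scale x u hu]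
    have := hcomp (u • x + fun _ => c)
    rw [h1, h2, ← hfe] at this
    exact this
  obtain ⟨y₁, y₂, hy⟩ := hf₁
  have hab : a - b ≠ 0 := sub_ne_zero.mpr hne
  -- choose u, c with u*a + c = y₁ and u*b + c = y₂ (or swapped)
  have solve : ∀ z₁ z₂ : ℝ, 0 ≤ (z₁ - z₂) / (a - b) → f₁ z₁ = f₁ z₂ := by
    intro z₁ z₂ hu
    set u := (z₁ - z₂) / (a - b) with hudef
    have huab : u * (a - b) = z₁ - z₂ := div_mul_cancel₀ _ hab
    have h := key u hu (z₁ - u * a)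
    have e1 : u * a + (z₁ - u * a) = z₁ := by ring
    have e2 : u * b + (z₁ - u * a) = z₂ := by
      have : u * a - u * b = z₁ - z₂ := by rw [← huab]; ring
      linarith
    rw [e1, e2] at h
    exact h
  rcases le_or_gt 0 ((y₁ - y₂) / (a - b)) with h | h
  · exact hy (solve y₁ y₂ h)
  · have : 0 ≤ (y₂ - y₁) / (a - b) := by
      have : (y₂ - y₁) / (a - b) = -((y₁ - y₂) / (a - b)) := by ring
      rw [this]; linarith
    exact hy ((solve y₂ y₁ this).symm)
end

section
/- Let Z = (Z₁, Z₂) be a bivariate normal random vector with mean zero and Var(Z₁) = Var(Z₂) = σ². Then Var(max{Z₁, Z₂}) ≤ Var(Z₂) = σ². -/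
open MeasureTheory ProbabilityTheory

lemma hasDerivAt_mul_abs (a : ℝ) : HasDerivAt (fun x : ℝ => x * |x|) (2 * |a|) a := by
  rcases lt_trichotomy a 0 with h | h | h
  · have h1 : HasDerivAt (fun x : ℝ => -(x * x)) (2 * |a|) a := by
      have := ((hasDerivAt_id a).mul (hasDerivAt_id a)).neg
      convert this using 1
      · rfl
      · rfl
      · rfl
      rw [abs_of_neg h]; simp; ring
    apply h1.congr_of_eventuallyEq
    filter_upwards [Iio_mem_nhds h] with x hx
    rw [abs_of_neg hx]; ring
  · subst h
    rw [hasDerivAt_iff_isLittleO]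
    simp only [abs_zero, mul_zero, zero_mul, sub_zero, smul_zero, smul_eq_mul]
    rw [Asymptotics.isLittleO_iff]
    intro c hc
    filter_upwards [Metric.ball_mem_nhds (0:ℝ) hc] with x hx
    simp only [Metric.mem_ball, Real.dist_eq, sub_zero] at hx
    rw [Real.norm_eq_abs, Real.norm_eq_abs, abs_mul, abs_abs]
    nlinarith [abs_nonneg x]
  · have h1 : HasDerivAt (fun x : ℝ => x * x) (2 * |a|) a := by
      have := (hasDerivAt_id a).mul (hasDerivAt_id a)
      convert this using 1
      · rfl
      · rfl
      · rfl
      rw [abs_of_pos h]; simp; ring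
    apply h1.congr_of_eventuallyEq
    filter_upwards [Ioi_mem_nhds h] with x hx
    rw [abs_of_pos hx]

lemma gaussianReal_map_neg' (v : NNReal) :
    (gaussianReal 0 v).map (fun x : ℝ => -x) = gaussianReal 0 v := by
  have h := gaussianReal_map_const_mul (μ := 0) (v := v) (-1)
  have h2 : (fun x : ℝ => -x) = (((-1 : ℝ)) * ·) := by funext x; ring
  rw [h2, h]
  norm_num

lemma integral_odd_gaussianReal (v : NNReal) {f : ℝ → ℝ} (hf : Continuous f)
    (hodd : ∀ x, f (-x) = - f x) : ∫ x, f x ∂(gaussianReal 0 v) = 0 := by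
  have h1 : ∫ x, f x ∂(gaussianReal 0 v) = ∫ x, f (-x) ∂(gaussianReal 0 v) := by
    conv_lhs => rw [← gaussianReal_map_neg' v]
    rw [integral_map measurable_neg.aemeasurable hf.aestronglyMeasurable]
  have h2 : ∫ x, f (-x) ∂(gaussianReal 0 v) = - ∫ x, f x ∂(gaussianReal 0 v) := by
    simp_rw [hodd]
    exact integral_neg f
  linarith

/-- Moriguti's inequality: for a centered bivariate Gaussian vector `(Z₁, Z₂)` with
`Var(Z₁) = Var(Z₂) = σ²`, we have `Var(max{Z₁, Z₂}) ≤ σ²`. -/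
theorem stmt14 {Ω : Type*} [MeasurableSpace Ω] (μ : Measure Ω) [IsProbabilityMeasure μ]
    (Z₁ Z₂ : Ω → ℝ) (σ : ℝ) (hσ : 0 < σ)
    (hm₁ : Measurable Z₁) (hm₂ : Measurable Z₂)
    (hgauss : ∀ a b : ℝ, ∃ v : NNReal,
      μ.map (fun ω => a * Z₁ ω + b * Z₂ ω) = gaussianReal 0 v)
    (hv₁ : variance Z₁ μ = σ ^ 2) (hv₂ : variance Z₂ μ = σ ^ 2) :
    variance (fun ω => max (Z₁ ω) (Z₂ ω)) μ ≤ σ ^ 2 := by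
  -- odd integrals vanish
  have key : ∀ (a b : ℝ) (f : ℝ → ℝ), Continuous f → (∀ x, f (-x) = - f x) →
      ∫ ω, f (a * Z₁ ω + b * Z₂ ω) ∂μ = 0 := by
    intro a b f hf hodd
    obtain ⟨v, hv⟩ := hgauss a b
    have hmeas : AEMeasurable (fun ω => a * Z₁ ω + b * Z₂ ω) μ :=
      ((hm₁.const_mul a).add (hm₂.const_mul b)).aemeasurable
    rw [← integral_map hmeas hf.aestronglyMeasurable, hv,
      integral_odd_gaussianReal v hf hodd]
  -- membership in L²
  have hmem : ∀ (Z : Ω → ℝ), Measurable Z → variance Z μ = σ ^ 2 → MemLp Z 2 μ := by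
    intro Z hm hv
    have h1 : evariance Z μ ≠ ⊤ := by
      intro h
      rw [variance, h] at hv
      simp at hv
      nlinarith
    exact (evariance_lt_top_iff_memLp hm.aestronglyMeasurable).mp (lt_top_iff_ne_top.mpr h1)
  have hZ₁ : MemLp Z₁ 2 μ := hmem Z₁ hm₁ hv₁
  have hZ₂ : MemLp Z₂ 2 μ := hmem Z₂ hm₂ hv₂
  -- product of L² functions is integrable
  have hprod : ∀ f g : Ω → ℝ, MemLp f 2 μ → MemLp g 2 μ →
      Integrable (fun ω => f ω * g ω) μ := by
    intro f g hf hg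
    have hi : Integrable (fun ω => (f ω ^ 2 + g ω ^ 2) / 2) μ :=
      (hf.integrable_sq.add hg.integrable_sq).div_const 2
    refine Integrable.mono' hi (hf.aestronglyMeasurable.mul hg.aestronglyMeasurable)
      (ae_of_all _ fun ω => ?_)
    rw [Real.norm_eq_abs, abs_mul]
    nlinarith [sq_nonneg (|f ω| - |g ω|), sq_abs (f ω), sq_abs (g ω), abs_nonneg (f ω),
      abs_nonneg (g ω)]
  set W : Ω → ℝ := fun ω => Z₁ ω + Z₂ ω with hWdef
  set D : Ω → ℝ := fun ω => Z₁ ω - Z₂ ω with hDdef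
  have hWm : MemLp W 2 μ := hZ₁.add hZ₂
  have hDm : MemLp D 2 μ := hZ₁.sub hZ₂
  have hWmeas : Measurable W := hm₁.add hm₂
  have hDmeas : Measurable D := hm₁.sub hm₂
  -- the means vanish
  have hEZ₁ : ∫ ω, Z₁ ω ∂μ = 0 := by
    have := key 1 0 id continuous_id (fun x => rfl)
    simpa using this
  have hEZ₂ : ∫ ω, Z₂ ω ∂μ = 0 := by
    have := key 0 1 id continuous_id (fun x => rfl)
    simpa using this
  -- E[(aZ₁+bZ₂)|aZ₁+bZ₂|] = 0
  have habs : Continuous (fun x : ℝ => x * |x|) := continuous_id.mul continuous_abs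
  have hoddabs : ∀ x : ℝ, (-x) * |(-x)| = - (x * |x|) := by
    intro x; rw [abs_neg]; ring
  -- derivative step: ∫ |D| * W = 0
  have hG : ∀ t : ℝ, ∫ ω, (D ω + t * W ω) * |D ω + t * W ω| ∂μ = 0 := by
    intro t
    have h := key (1 + t) (t - 1) (fun x => x * |x|) habs hoddabs
    have heq : ∀ ω, (D ω + t * W ω) * |D ω + t * W ω|
        = ((1 + t) * Z₁ ω + (t - 1) * Z₂ ω) * |(1 + t) * Z₁ ω + (t - 1) * Z₂ ω| := by
      intro ω
      rw [show D ω + t * W ω = (1 + t) * Z₁ ω + (t - 1) * Z₂ ω by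
        simp only [hWdef, hDdef]; ring]
    rw [integral_congr_ae (ae_of_all _ heq)]
    exact h
  have hder := hasDerivAt_integral_of_dominated_loc_of_deriv_le (μ := μ) (x₀ := (0:ℝ)) (s := Metric.ball 0 1)
    (F := fun t ω => (D ω + t * W ω) * |D ω + t * W ω|)
    (F' := fun t ω => 2 * |D ω + t * W ω| * W ω)
    (bound := fun ω => 2 * (|D ω| + |W ω|) * |W ω|)
    (Metric.ball_mem_nhds 0 one_pos)
    (Filter.Eventually.of_forall fun t => by
      have hm : Measurable (fun ω => D ω + t * W ω) := hDmeas.add (hWmeas.const_mul t)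
      exact (hm.mul hm.abs).aestronglyMeasurable)
    (by
      have h0 : Integrable (fun ω => D ω * |D ω|) μ :=
        hprod D (fun ω => |D ω|) hDm hDm.abs
      simpa using h0)
    (((hDmeas.add (hWmeas.const_mul 0)).abs.const_mul 2).mul hWmeas).aestronglyMeasurable
    (ae_of_all _ fun ω t ht => by
      simp only [Metric.mem_ball, Real.dist_eq, sub_zero] at ht
      have h1 : |D ω + t * W ω| ≤ |D ω| + |W ω| := by
        refine (abs_add_le _ _).trans ?_
        have : |t * W ω| ≤ |W ω| := by
          rw [abs_mul]
          nlinarith [abs_nonneg (W ω), abs_nonneg t, le_of_lt ht]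
        linarith
      rw [Real.norm_eq_abs, abs_mul, abs_mul, abs_abs]
      have h2 : |(2:ℝ)| = 2 := by norm_num
      rw [h2]
      show 2 * |D ω + t * W ω| * |W ω| ≤ 2 * (|D ω| + |W ω|) * |W ω|
      nlinarith [abs_nonneg (W ω), abs_nonneg (D ω + t * W ω),
        mul_le_mul_of_nonneg_right h1 (abs_nonneg (W ω))])
    (hprod (fun ω => 2 * (|D ω| + |W ω|)) (fun ω => |W ω|)
      ((hDm.abs.add hWm.abs).const_mul 2) hWm.abs)
    (ae_of_all _ fun ω t _ => by
      have hinner : HasDerivAt (fun s : ℝ => D ω + s * W ω) (W ω) t := by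
        have := ((hasDerivAt_id t).mul_const (W ω)).const_add (D ω)
        simpa using this
      have := (hasDerivAt_mul_abs (D ω + t * W ω)).comp t hinner
      exact this)
  have hDW : ∫ ω, |D ω| * W ω ∂μ = 0 := by
    have h2 := hder.2
    have h3 : (fun t : ℝ => ∫ ω, (D ω + t * W ω) * |D ω + t * W ω| ∂μ)
        = fun _ : ℝ => (0:ℝ) := funext hG
    rw [h3] at h2
    have h4 := h2.unique (hasDerivAt_const 0 0)
    have h5 : (fun ω => 2 * |D ω + 0 * W ω| * W ω) = fun ω => (2:ℝ) * (|D ω| * W ω) := by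
      funext ω; rw [zero_mul, add_zero]; ring
    rw [h5, integral_const_mul] at h4
    linarith
  -- final computation
  set M : Ω → ℝ := fun ω => max (Z₁ ω) (Z₂ ω) with hMdef
  have hMrep : ∀ ω, M ω = 2⁻¹ * (W ω + |D ω|) := by
    intro ω
    simp only [hMdef, hWdef, hDdef]
    rcases le_total (Z₁ ω) (Z₂ ω) with h | h
    · rw [max_eq_right h, abs_of_nonpos (by linarith)]; ring
    · rw [max_eq_left h, abs_of_nonneg (by linarith)]; ring
  have hMmem : MemLp M 2 μ := by
    have h := (hWm.add hDm.abs).const_mul (2⁻¹ : ℝ)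
    refine h.ae_eq (ae_of_all _ fun ω => ?_)
    exact (hMrep ω).symm
  -- second moments of Z₁ and Z₂
  have hEZ₁sq : ∫ ω, Z₁ ω ^ 2 ∂μ = σ ^ 2 := by
    have h := variance_eq_sub hZ₁
    rw [hv₁] at h
    have h2 : μ[Z₁] = 0 := hEZ₁
    rw [h2] at h
    simp only [Pi.pow_apply] at h
    linarith
  have hEZ₂sq : ∫ ω, Z₂ ω ^ 2 ∂μ = σ ^ 2 := by
    have h := variance_eq_sub hZ₂
    rw [hv₂] at h
    have h2 : μ[Z₂] = 0 := hEZ₂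
    rw [h2] at h
    simp only [Pi.pow_apply] at h
    linarith
  -- integrabilities
  have iW2 : Integrable (fun ω => W ω ^ 2) μ := hWm.integrable_sq
  have iD2 : Integrable (fun ω => D ω ^ 2) μ := hDm.integrable_sq
  have iZ₁2 : Integrable (fun ω => Z₁ ω ^ 2) μ := hZ₁.integrable_sq
  have iZ₂2 : Integrable (fun ω => Z₂ ω ^ 2) μ := hZ₂.integrable_sq
  have iDW : Integrable (fun ω => |D ω| * W ω) μ := hprod _ _ hDm.abs hWm
  -- sum of second moments of W and D
  have hsumWD : ∫ ω, W ω ^ 2 ∂μ + ∫ ω, D ω ^ 2 ∂μ = 4 * σ ^ 2 := by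
    rw [← integral_add iW2 iD2]
    have heq : ∀ ω, W ω ^ 2 + D ω ^ 2 = 2 * Z₁ ω ^ 2 + 2 * Z₂ ω ^ 2 := by
      intro ω; simp only [hWdef, hDdef]; ring
    rw [integral_congr_ae (ae_of_all _ heq),
      integral_add (iZ₁2.const_mul 2) (iZ₂2.const_mul 2),
      integral_const_mul, integral_const_mul, hEZ₁sq, hEZ₂sq]
    ring
  -- second moment of M
  have hEM2 : ∫ ω, M ω ^ 2 ∂μ = σ ^ 2 := by
    have heq : ∀ ω, M ω ^ 2
        = 4⁻¹ * W ω ^ 2 + 4⁻¹ * D ω ^ 2 + 2⁻¹ * (|D ω| * W ω) := by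
      intro ω
      rw [hMrep ω]
      have h2 : (2⁻¹ * (W ω + |D ω|)) ^ 2
          = 4⁻¹ * W ω ^ 2 + 4⁻¹ * |D ω| ^ 2 + 2⁻¹ * (|D ω| * W ω) := by ring
      rw [h2, sq_abs]
    have iA : Integrable (fun ω => 4⁻¹ * W ω ^ 2 + 4⁻¹ * D ω ^ 2) μ :=
      (iW2.const_mul 4⁻¹).add (iD2.const_mul 4⁻¹)
    rw [integral_congr_ae (ae_of_all _ heq),
      integral_add iA (iDW.const_mul 2⁻¹),
      integral_add (iW2.const_mul 4⁻¹) (iD2.const_mul 4⁻¹),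
      integral_const_mul, integral_const_mul, integral_const_mul, hDW]
    linarith
  -- conclude
  rw [variance_eq_sub hMmem]
  have h1 : μ[M ^ 2] = σ ^ 2 := by
    rw [← hEM2]
    congr 1
  have h2 : (0:ℝ) ≤ μ[M] ^ 2 := sq_nonneg _
  rw [h1]
  linarith
end
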